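/- Let k be an integer and let λ be a real number with p_k(λ) = 0, λ ≠ 0 and λ ≠ 1. Then the vector v = (1, 1/(λ-1), 1/λ) ∈ ℝ³ is an eigenvector of A_k with eigenvalue λ, i.e. A_k · v = λ · v. -/
import Mathlib


/-- For an integer `k`, the real matrix `A_k` with rows `(k-1, -1, -1)`, `(1, 1, 0)`, `(1, 0, 0)`. -/
def AmatR (k : ℤ) : Matrix (Fin 3) (Fin 3) ℝ :=
  !![(k : ℝ) - 1, -1, -1; 1, 1, 0; 1, 0, 0]

/-- If `λ` is a real root of `p_k(x) = x^3 - k x^2 + (k+1) x - 1` with `λ ≠ 0` and `λ ≠ 1`,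
then `v = (1, 1/(λ-1), 1/λ)` is an eigenvector of `A_k` with eigenvalue `λ`. -/
theorem eigenvector_of_root (k : ℤ) (l : ℝ)
    (hroot : l ^ 3 - (k : ℝ) * l ^ 2 + ((k : ℝ) + 1) * l - 1 = 0)
    (h0 : l ≠ 0) (h1 : l ≠ 1) :
    (AmatR k).mulVec ![1, 1 / (l - 1), 1 / l] = l • ![1, 1 / (l - 1), 1 / l] := by
  have hl1 : l - 1 ≠ 0 := sub_ne_zero.mpr h1
  funext i
  fin_cases i <;>
    simp [AmatR, Matrix.mulVec, dotProduct, Fin.sum_univ_three] <;>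
    field_simp <;> ring_nf <;> nlinarith [hroot]
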